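/- arXiv:1811.08810 — 3 statements merged into one kernel-verified Lean document; each statement's English description precedes it below -/
import Mathlib

section
/- Let C be a commutative ring in which 2 is invertible, F a finitely generated projective C-module, and R ⊆ F ⊗_C F a C-submodule which is a direct summand of the submodule Sym_2(F) of symmetric tensors. Then the inclusions C ↪ A and F ↪ E (v ↦ v ⊗ 1) induce a C-algebra homomorphism φ : T_C(F)/(R) → Cℓ_A(E,q) satisfying φ(class of v) = ι(v ⊗ 1) for all v ∈ F, where T_C(F)/(R) is the quotient of the tensor algebra of F by the two-sided ideal generated by R, and Cℓ_A(E,q) is the Clifford algebra of the quadratic form q on the A-module E. -/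
open TensorProduct

noncomputable section

universe u

variable (C : Type u) [CommRing C]

/-- The submodule of symmetric tensors of `F ⊗[C] F`, spanned by the `u ⊗ v + v ⊗ u`. -/
def symTensors (F : Type u) [AddCommGroup F] [Module C F] : Submodule C (F ⊗[C] F) :=
  Submodule.span C {z | ∃ u v : F, z = u ⊗ₜ[C] v + v ⊗ₜ[C] u}

variable (F : Type u) [AddCommGroup F] [Module C F]
variable (Rsub : Submodule C (F ⊗[C] F))

/-- `Q := Sym₂ F / R`. -/
abbrev SymQuot : Type u :=
  ↥(symTensors C F) ⧸ Rsub.comap (symTensors C F).subtype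

/-- The symmetrized tensor `(u, v) ↦ u ⊗ v + v ⊗ u`, as a bilinear map into `Sym₂ F`. -/
def symMk : F →ₗ[C] F →ₗ[C] ↥(symTensors C F) :=
  LinearMap.mk₂ C
    (fun u v => ⟨u ⊗ₜ[C] v + v ⊗ₜ[C] u, Submodule.subset_span ⟨u, v, rfl⟩⟩)
    (fun u u' v => Subtype.ext <| by
      simp only [Submodule.coe_add, TensorProduct.add_tmul, TensorProduct.tmul_add]; abel)
    (fun c u v => Subtype.ext <| by
      simp only [SetLike.val_smul, TensorProduct.smul_tmul', TensorProduct.tmul_smul,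
        smul_add])
    (fun u v v' => Subtype.ext <| by
      simp only [Submodule.coe_add, TensorProduct.add_tmul, TensorProduct.tmul_add]; abel)
    (fun c u v => Subtype.ext <| by
      simp only [SetLike.val_smul, TensorProduct.smul_tmul', TensorProduct.tmul_smul,
        smul_add])

variable (A : Type u) [CommRing A] [Algebra C A]
variable (j : SymQuot C F Rsub →ₗ[C] A)

/-- The `C`-bilinear map `F × F → A`, `(u,v) ↦ j (class of u ⊗ v + v ⊗ u)`. -/
def bil0 : F →ₗ[C] F →ₗ[C] A :=
  (symMk C F).compr₂ (j ∘ₗ (Rsub.comap (symTensors C F).subtype).mkQ)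

/-- The `A`-bilinear extension of `bil0` to `E = A ⊗[C] F`. -/
def bilE : (A ⊗[C] F) →ₗ[A] (A ⊗[C] F) →ₗ[A] A :=
  LinearMap.liftBaseChange A
    (((LinearMap.liftBaseChangeEquiv A).restrictScalars C).toLinearMap ∘ₗ
      bil0 C F Rsub A j)

/-- The `A`-valued quadratic form `q (x) = ½ ⬝ B (x, x)` on `E = A ⊗[C] F`. -/
def cliffordQ [Invertible (2 : C)] : QuadraticForm A (A ⊗[C] F) :=
  LinearMap.BilinMap.toQuadraticMap
    ((algebraMap C A (⅟ 2) : A) • bilE C F Rsub A j)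

/-- The canonical map `F ⊗[C] F → T_C(F)`, `u ⊗ v ↦ ι u * ι v`. -/
def tensorSquareMul : F ⊗[C] F →ₗ[C] TensorAlgebra C F :=
  TensorProduct.lift
    ((LinearMap.mul C (TensorAlgebra C F)).compl₁₂ (TensorAlgebra.ι C) (TensorAlgebra.ι C))

/-- The relation on `T_C(F)` whose ring quotient is `T_C(F)/(R)`, the quotient by the
two-sided ideal generated by `R ⊆ F ⊗ F ⊆ T_C(F)`. -/
def relOfR : TensorAlgebra C F → TensorAlgebra C F → Prop :=
  fun x y => (∃ r ∈ Rsub, x = tensorSquareMul C F r) ∧ y = 0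

/-- Let `C` be a commutative ring with `2` invertible, `F` a finitely
generated projective `C`-module and `R ⊆ Sym₂ F ⊆ F ⊗ F` a direct summand of the
symmetric tensors.  With `Q := Sym₂ F / R`, `A := Sym_C Q` (any realization of the
symmetric algebra, specified by its universal property), `E := F ⊗ A`, and `q` the
quadratic form on `E` extending `v ↦ (class of v ⊗ v)`, the inclusions `C ↪ A`, `F ↪ E`
induce a `C`-algebra homomorphism `φ : T_C(F)/(R) → Cl_A(E, q)` with
`φ (class of v) = ι (v ⊗ 1)`. -/
theorem exists_algHom_tensorQuot_to_clifford
    [Invertible (2 : C)] [Module.Finite C F] [Module.Projective C F]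
    (hle : Rsub ≤ symTensors C F)
    (hsummand : ∃ W : Submodule C (F ⊗[C] F),
      W ≤ symTensors C F ∧ Rsub ⊓ W = ⊥ ∧ Rsub ⊔ W = symTensors C F)
    (hUP : ∀ (B : Type u) [CommRing B] [Algebra C B] (g : SymQuot C F Rsub →ₗ[C] B),
      ∃! h : A →ₐ[C] B, (h.toLinearMap ∘ₗ j : SymQuot C F Rsub →ₗ[C] B) = g) :
    ∃ φ : RingQuot (relOfR C F Rsub) →ₐ[C] CliffordAlgebra (cliffordQ C F Rsub A j),
      ∀ v : F,
        φ (RingQuot.mkAlgHom C (relOfR C F Rsub) (TensorAlgebra.ι C v))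
          = CliffordAlgebra.ι (cliffordQ C F Rsub A j) ((1 : A) ⊗ₜ[C] v) := by
  classical
  set q := cliffordQ C F Rsub A j with hq
  let ι1 : F →ₗ[C] CliffordAlgebra q :=
    ((CliffordAlgebra.ι q).restrictScalars C) ∘ₗ ((TensorProduct.mk C A F) 1)
  let f : TensorAlgebra C F →ₐ[C] CliffordAlgebra q := TensorAlgebra.lift C ι1
  have hf_ι : ∀ v : F, f (TensorAlgebra.ι C v)
      = CliffordAlgebra.ι q ((1 : A) ⊗ₜ[C] v) := by
    intro v
    simp [f, ι1]
  -- bilE on elementary tensors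
  have hbilE : ∀ u v : F,
      bilE C F Rsub A j ((1 : A) ⊗ₜ[C] u) ((1 : A) ⊗ₜ[C] v) = bil0 C F Rsub A j u v := by
    intro u v
    simp only [bilE, LinearMap.liftBaseChange_tmul, one_smul, LinearMap.coe_comp,
      LinearEquiv.coe_coe, LinearEquiv.restrictScalars_apply, Function.comp_apply]
  have hbil0_symm : ∀ u v : F, bil0 C F Rsub A j u v = bil0 C F Rsub A j v u := by
    intro u v
    have : symMk C F u v = symMk C F v u := by
      apply Subtype.ext
      show u ⊗ₜ[C] v + v ⊗ₜ[C] u = v ⊗ₜ[C] u + u ⊗ₜ[C] v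
      abel
    simp only [bil0, LinearMap.compr₂_apply, this]
  -- the polar form of q on images of F
  have hpolar : ∀ u v : F,
      QuadraticMap.polar q ((1 : A) ⊗ₜ[C] u) ((1 : A) ⊗ₜ[C] v) = bil0 C F Rsub A j u v := by
    intro u v
    rw [hq, cliffordQ, LinearMap.BilinMap.polar_toQuadraticMap]
    simp only [LinearMap.smul_apply, smul_eq_mul, hbilE]
    rw [hbil0_symm v u]
    have h2 : (algebraMap C A (⅟ 2)) * 2 = 1 := by
      rw [(map_ofNat (algebraMap C A) 2).symm, ← map_mul, invOf_mul_self, map_one]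
    calc algebraMap C A (⅟ 2) * bil0 C F Rsub A j u v
          + algebraMap C A (⅟ 2) * bil0 C F Rsub A j u v
        = (algebraMap C A (⅟ 2) * 2) * bil0 C F Rsub A j u v := by ring
      _ = bil0 C F Rsub A j u v := by rw [h2, one_mul]
  -- key computation on symmetrized generators
  have hkey : ∀ u v : F,
      f (tensorSquareMul C F (u ⊗ₜ[C] v + v ⊗ₜ[C] u))
        = algebraMap A (CliffordAlgebra q) (bil0 C F Rsub A j u v) := by
    intro u v
    have : tensorSquareMul C F (u ⊗ₜ[C] v + v ⊗ₜ[C] u)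
        = TensorAlgebra.ι C u * TensorAlgebra.ι C v
          + TensorAlgebra.ι C v * TensorAlgebra.ι C u := by
      simp [tensorSquareMul]
    rw [this, map_add, map_mul, map_mul, hf_ι, hf_ι,
      CliffordAlgebra.ι_mul_ι_add_swap, hpolar]
  -- f ∘ tensorSquareMul and algebraMap ∘ j ∘ mkQ agree on symmetric tensors
  have hsym : ∀ (s : F ⊗[C] F) (hs : s ∈ symTensors C F),
      f (tensorSquareMul C F s)
        = algebraMap A (CliffordAlgebra q)
            (j ((Rsub.comap (symTensors C F).subtype).mkQ ⟨s, hs⟩)) := by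
    intro s hs
    induction hs using Submodule.span_induction with
    | mem z hz =>
      obtain ⟨u, v, rfl⟩ := hz
      rw [hkey]
      congr 1
    | zero =>
      have : (⟨0, (symTensors C F).zero_mem⟩ : ↥(symTensors C F)) = 0 := rfl
      rw [this]
      simp
    | add x y hx hy ihx ihy =>
      have : (⟨x + y, add_mem hx hy⟩ : ↥(symTensors C F)) = ⟨x, hx⟩ + ⟨y, hy⟩ := rfl
      rw [this, map_add, map_add, map_add, map_add, ihx, ihy, ← map_add]
    | smul c x hx ih =>
      have : (⟨c • x, Submodule.smul_mem _ c hx⟩ : ↥(symTensors C F))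
          = c • (⟨x, hx⟩ : ↥(symTensors C F)) := rfl
      have halg : ∀ (y : A), algebraMap A (CliffordAlgebra q) (c • y)
          = c • algebraMap A (CliffordAlgebra q) y := fun y => by
        rw [Algebra.smul_def, map_mul, ← IsScalarTower.algebraMap_apply, ← Algebra.smul_def]
      rw [this, map_smul, map_smul, ih, map_smul, map_smul, halg]
  -- f kills R
  have hzero : ∀ r ∈ Rsub, f (tensorSquareMul C F r) = 0 := by
    intro r hr
    rw [hsym r (hle hr)]
    have : ((Rsub.comap (symTensors C F).subtype).mkQ ⟨r, hle hr⟩) = 0 := by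
      rw [Submodule.mkQ_apply, Submodule.Quotient.mk_eq_zero]
      exact hr
    rw [this, map_zero, map_zero]
  have w : ∀ ⦃x y⦄, relOfR C F Rsub x y → f x = f y := by
    rintro x y ⟨⟨r, hr, rfl⟩, rfl⟩
    rw [hzero r hr, map_zero]
  refine ⟨RingQuot.liftAlgHom C ⟨f, w⟩, fun v => ?_⟩
  rw [RingQuot.liftAlgHom_mkAlgHom_apply, hf_ι]

end
end

section
/- Let C be a commutative ring in which 2 is invertible, F a finitely generated projective C-module, and R ⊆ F ⊗_C F a C-submodule which is a direct summand of the submodule Sym_2(F) of symmetric tensors. Then the canonical C-algebra homomorphism φ : T_C(F)/(R) → Cℓ_A(E,q), determined by φ(class of v) = ι(v ⊗ 1) for v ∈ F, is surjective. -/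
open TensorProduct

noncomputable section

universe u

variable (C : Type u) [CommRing C]

variable (F : Type u) [AddCommGroup F] [Module C F]
variable (Rsub : Submodule C (F ⊗[C] F))

variable (A : Type u) [CommRing A] [Algebra C A]
variable (j : SymQuot C F Rsub →ₗ[C] A)

/-- In the setting of Statement 3 (with `C` a commutative ring with `2`
invertible, `F` finitely generated projective, `R` a direct summand of `Sym₂ F`,
`Q := Sym₂ F / R`, `A := Sym_C Q` realized via its universal property, `E := F ⊗ A`), the
canonical `C`-algebra homomorphism `φ : T_C(F)/(R) → Cl_A(E, q)`, determined by
`φ (class of v) = ι (v ⊗ 1)` for `v : F`, is surjective. -/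
theorem algHom_tensorQuot_to_clifford_surjective
    [Invertible (2 : C)] [Module.Finite C F] [Module.Projective C F]
    (hle : Rsub ≤ symTensors C F)
    (hsummand : ∃ W : Submodule C (F ⊗[C] F),
      W ≤ symTensors C F ∧ Rsub ⊓ W = ⊥ ∧ Rsub ⊔ W = symTensors C F)
    (hUP : ∀ (B : Type u) [CommRing B] [Algebra C B] (g : SymQuot C F Rsub →ₗ[C] B),
      ∃! h : A →ₐ[C] B, (h.toLinearMap ∘ₗ j : SymQuot C F Rsub →ₗ[C] B) = g)
    (φ : RingQuot (relOfR C F Rsub) →ₐ[C] CliffordAlgebra (cliffordQ C F Rsub A j))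
    (hφ : ∀ v : F,
      φ (RingQuot.mkAlgHom C (relOfR C F Rsub) (TensorAlgebra.ι C v))
        = CliffordAlgebra.ι (cliffordQ C F Rsub A j) ((1 : A) ⊗ₜ[C] v)) :
    Function.Surjective φ := by
  classical
  set S : Subalgebra C (CliffordAlgebra (cliffordQ C F Rsub A j)) := φ.range with hS
  have hιS : ∀ v : F,
      CliffordAlgebra.ι (cliffordQ C F Rsub A j) ((1 : A) ⊗ₜ[C] v) ∈ S := fun v =>
    ⟨RingQuot.mkAlgHom C (relOfR C F Rsub) (TensorAlgebra.ι C v), hφ v⟩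
  -- the bilinear values are in S
  have hbilE : ∀ u v : F,
      bilE C F Rsub A j ((1 : A) ⊗ₜ[C] u) ((1 : A) ⊗ₜ[C] v) = bil0 C F Rsub A j u v := by
    intro u v
    rw [bilE, LinearMap.liftBaseChange_tmul, one_smul]
    simp only [LinearMap.comp_apply, LinearEquiv.coe_coe, LinearEquiv.restrictScalars_apply]
    rw [show (LinearMap.liftBaseChangeEquiv A (bil0 C F Rsub A j u))
        = LinearMap.liftBaseChange A (bil0 C F Rsub A j u) from rfl,
      LinearMap.liftBaseChange_tmul, one_smul]
  have hbil : ∀ u v : F,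
      algebraMap A (CliffordAlgebra (cliffordQ C F Rsub A j)) (bil0 C F Rsub A j u v) ∈ S := by
    intro u v
    have key := CliffordAlgebra.ι_mul_ι_add_swap (Q := cliffordQ C F Rsub A j)
      ((1 : A) ⊗ₜ[C] u) ((1 : A) ⊗ₜ[C] v)
    have hpolar : QuadraticMap.polar (cliffordQ C F Rsub A j)
        ((1 : A) ⊗ₜ[C] u) ((1 : A) ⊗ₜ[C] v) = bil0 C F Rsub A j u v := by
      rw [cliffordQ, LinearMap.BilinMap.polar_toQuadraticMap]
      have hsymm0 : symMk C F v u = symMk C F u v := Subtype.ext (add_comm _ _)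
      have hsymm : bil0 C F Rsub A j v u = bil0 C F Rsub A j u v := by
        simp only [bil0, LinearMap.compr₂_apply, hsymm0]
      simp only [LinearMap.smul_apply, hbilE, hsymm, smul_eq_mul]
      rw [← two_mul, ← mul_assoc,
        show (2 : A) * algebraMap C A (⅟ 2) = 1 by
          rw [show (2 : A) = algebraMap C A 2 from (map_ofNat (algebraMap C A) 2).symm, ← map_mul, mul_invOf_self, map_one],
        one_mul]
    rw [hpolar] at key
    rw [← key]
    exact add_mem (mul_mem (hιS u) (hιS v)) (mul_mem (hιS v) (hιS u))
  -- algebraMap of j x is in S for all x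
  haveI : IsScalarTower C A (CliffordAlgebra (cliffordQ C F Rsub A j)) := inferInstance
  set L : SymQuot C F Rsub →ₗ[C] CliffordAlgebra (cliffordQ C F Rsub A j) :=
    ((Algebra.linearMap A (CliffordAlgebra (cliffordQ C F Rsub A j))).restrictScalars C) ∘ₗ j
    with hL
  have hjx : ∀ x : SymQuot C F Rsub,
      algebraMap A (CliffordAlgebra (cliffordQ C F Rsub A j)) (j x) ∈ S := by
    have hgen : ∀ y : ↥(symTensors C F), L ((Rsub.comap (symTensors C F).subtype).mkQ y) ∈ S := by
      have hsub : symTensors C F ≤ Submodule.map (symTensors C F).subtype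
          (Submodule.comap (L ∘ₗ (Rsub.comap (symTensors C F).subtype).mkQ)
            (Subalgebra.toSubmodule S)) := Submodule.span_le.2 (by
        rintro z ⟨u, v, rfl⟩
        refine ⟨symMk C F u v, ?_, rfl⟩
        refine Submodule.mem_comap.mpr ?_
        exact hbil u v)
      intro y
      obtain ⟨y', hy', hval⟩ := hsub y.2
      have hyy : y' = y := Subtype.ext hval
      rw [← hyy]
      exact hy'
    intro x
    obtain ⟨y, rfl⟩ := Submodule.mkQ_surjective _ x
    exact hgen y
  -- every element of A is in the adjoin of the range of j
  have hadj : ∀ a : A, a ∈ Algebra.adjoin C (Set.range j) := by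
    set B' := Algebra.adjoin C (Set.range j) with hB'
    set g : SymQuot C F Rsub →ₗ[C] ↥B' :=
      j.codRestrict (Submodule.restrictScalars C B'.toSubmodule)
        (fun x => Algebra.subset_adjoin ⟨x, rfl⟩) with hg
    obtain ⟨h, hh, -⟩ := hUP ↥B' g
    obtain ⟨h₀, -, huniq⟩ := hUP A j
    have h1 : B'.val.comp h = AlgHom.id C A := by
      have e1 : B'.val.comp h = h₀ := huniq _ (LinearMap.ext fun x => by
        have hx := LinearMap.congr_fun hh x
        simp only [LinearMap.comp_apply, AlgHom.comp_toLinearMap,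
          AlgHom.toLinearMap_apply, AlgHom.comp_apply] at hx ⊢
        rw [hx]
        rfl)
      have e2 : AlgHom.id C A = h₀ := huniq _ (LinearMap.ext fun x => rfl)
      rw [e1, e2]
    intro a
    have : B'.val (h a) = a := by
      have := congrArg (fun f => f a) h1
      simpa using this
    rw [← this]
    exact (h a).2
  have hA : ∀ a : A,
      algebraMap A (CliffordAlgebra (cliffordQ C F Rsub A j)) a ∈ S := by
    intro a
    refine Algebra.adjoin_induction ?_ ?_ ?_ ?_ (hadj a)
    · rintro x ⟨y, rfl⟩; exact hjx y
    · intro c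
      rw [← IsScalarTower.algebraMap_apply]
      exact S.algebraMap_mem c
    · intro x y _ _ hx hy; rw [map_add]; exact add_mem hx hy
    · intro x y _ _ hx hy; rw [map_mul]; exact mul_mem hx hy
  -- ι of any element of E is in S
  have hιE : ∀ e : A ⊗[C] F, CliffordAlgebra.ι (cliffordQ C F Rsub A j) e ∈ S := by
    intro e
    induction e with
    | zero => rw [map_zero]; exact zero_mem S
    | tmul a v =>
      have : (a ⊗ₜ[C] v : A ⊗[C] F) = a • ((1 : A) ⊗ₜ[C] v) := by
        rw [TensorProduct.smul_tmul', smul_eq_mul, mul_one]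
      rw [this, map_smul, Algebra.smul_def]
      exact mul_mem (hA a) (hιS v)
    | add x y hx hy => rw [map_add]; exact add_mem hx hy
  intro x
  suffices h : x ∈ S by exact h
  induction x using CliffordAlgebra.induction with
  | algebraMap a => exact hA a
  | ι e => exact hιE e
  | mul x y hx hy => exact mul_mem hx hy
  | add x y hx hy => exact add_mem hx hy


end
end

section
/- Let C be a commutative ring in which 2 is invertible and let D/C be a relative Frobenius extension of rank n with Frobenius form Λ and Λ-dual bases (e_1,…,e_n),(f_1,…,f_n). Assume C·1 is a direct summand of the C-module D with F := D/C·1 finitely generated projective, let π : D → F be the quotient map, and let R ⊆ F ⊗_C F be the image of the C-linear map D → F ⊗_C F, d ↦ Σ_{i=1}^n π(d e_i) ⊗ π(f_i). Then R is contained in the submodule Sym_2(F) of symmetric tensors, and (provided R is a direct summand of Sym_2(F)) there is a surjective C-algebra homomorphism H(D/C) := T_C(F)/(R) → Cℓ_A(E,q) sending the class of π(d) to ι(π(d) ⊗ 1) for d ∈ D. -/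
open TensorProduct

noncomputable section

universe u

variable (C : Type u) [CommRing C]

variable (F : Type u) [AddCommGroup F] [Module C F]
variable (Rsub : Submodule C (F ⊗[C] F))

variable (A : Type u) [CommRing A] [Algebra C A]
variable (j : SymQuot C F Rsub →ₗ[C] A)

section Frobenius

variable (D : Type u) [CommRing D] [Algebra C D]

/-- `F := D / C·1`. -/
abbrev FrobQuotF : Type u := D ⧸ Submodule.span C {(1 : D)}

/-- The quotient map `π : D → F = D/C·1`. -/
def frobPi : D →ₗ[C] FrobQuotF C D := (Submodule.span C {(1 : D)}).mkQ

/-- The map `ρ : D → F ⊗ F`, `d ↦ ∑ i, π (d * e i) ⊗ π (f i)`, built out of a pair of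
`Λ`-dual bases of a relative Frobenius extension `D/C` of rank `n`. -/
def frobRho {n : ℕ} (e f : Fin n → D) : D →ₗ[C] FrobQuotF C D ⊗[C] FrobQuotF C D :=
  ∑ i : Fin n,
    ((TensorProduct.mk C (FrobQuotF C D) (FrobQuotF C D)).flip (frobPi C D (f i))).comp
      ((frobPi C D).comp (LinearMap.mulRight C (e i)))

end Frobenius

section Aux

variable {C' : Type u} [CommRing C'] {F' : Type u} [AddCommGroup F'] [Module C' F']

lemma aux_add_comm_mem_symTensors (z : F' ⊗[C'] F') :
    z + (TensorProduct.comm C' F' F') z ∈ symTensors C' F' := by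
  induction z using TensorProduct.induction_on with
  | zero => simpa using (symTensors C' F').zero_mem
  | tmul u v => exact Submodule.subset_span ⟨u, v, by simp⟩
  | add x y hx hy =>
      rw [map_add, show x + y + ((TensorProduct.comm C' F' F') x +
        (TensorProduct.comm C' F' F') y) = (x + (TensorProduct.comm C' F' F') x) +
        (y + (TensorProduct.comm C' F' F') y) by abel]
      exact Submodule.add_mem _ hx hy

lemma aux_mem_symTensors_of_comm_fix [Invertible (2 : C')] (z : F' ⊗[C'] F')
    (h : (TensorProduct.comm C' F' F') z = z) : z ∈ symTensors C' F' := by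
  have h2 : (2 : C') • z = z + (TensorProduct.comm C' F' F') z := by
    rw [h, two_smul]
  have hm : (⅟ (2 : C')) • ((2 : C') • z) ∈ symTensors C' F' :=
    Submodule.smul_mem _ _ (h2 ▸ aux_add_comm_mem_symTensors z)
  simpa [smul_smul] using hm

variable {D' : Type u} [CommRing D'] [Algebra C' D']

lemma aux_frob_expand {n : ℕ} (Λ : D' →ₗ[C'] C') (e : Module.Basis (Fin n) C' D') (f : Fin n → D')
    (hd : ∀ i k, Λ (e i * f k) = if i = k then 1 else 0) (x : D') :
    ∑ i, Λ (x * f i) • e i = x := by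
  conv_rhs => rw [← e.sum_repr x]
  refine Finset.sum_congr rfl fun k _ => ?_
  congr 1
  have hx : x * f k = ∑ i, e.repr x i • (e i * f k) := by
    conv_lhs => rw [← e.sum_repr x]
    rw [Finset.sum_mul]
    exact Finset.sum_congr rfl fun i _ => smul_mul_assoc _ _ _
  rw [hx, map_sum]
  simp [hd, Finset.sum_ite_eq']

lemma aux_frob_key {n : ℕ} (Λ : D' →ₗ[C'] C') (e : Module.Basis (Fin n) C' D') (f : Fin n → D')
    (hd : ∀ i k, Λ (e i * f k) = if i = k then 1 else 0) (x : D') (a b : Fin n) :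
    ∑ i, Λ (x * e i * f a) * Λ (f i * f b) = Λ (x * f a * f b) := by
  have hb : (f b : D') = ∑ i, Λ (f b * f i) • e i := (aux_frob_expand Λ e f hd (f b)).symm
  conv_rhs => rw [hb]
  rw [Finset.mul_sum, map_sum]
  refine Finset.sum_congr rfl fun i _ => ?_
  rw [mul_smul_comm, map_smul, smul_eq_mul,
    show x * f a * e i = x * e i * f a by ring,
    show f b * f i = f i * f b by ring, mul_comm]

lemma aux_casimir_expand {n : ℕ} (Λ : D' →ₗ[C'] C') (e : Module.Basis (Fin n) C' D') (f : Fin n → D')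
    (hd : ∀ i k, Λ (e i * f k) = if i = k then 1 else 0) (x : D') :
    ∑ i, (x * e i) ⊗ₜ[C'] (f i) =
      ∑ a, ∑ b, Λ (x * f a * f b) • ((e a : D') ⊗ₜ[C'] (e b : D')) := by
  have h1 : ∀ i : Fin n, (x * e i) ⊗ₜ[C'] (f i) =
      ∑ a, ∑ b, (Λ (x * e i * f a) * Λ (f i * f b)) • ((e a : D') ⊗ₜ[C'] (e b : D')) := by
    intro i
    have hxe : x * e i = ∑ a, Λ (x * e i * f a) • e a :=
      (aux_frob_expand Λ e f hd (x * e i)).symm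
    have hfi : (f i : D') = ∑ b, Λ (f i * f b) • e b :=
      (aux_frob_expand Λ e f hd (f i)).symm
    conv_lhs => rw [hxe, hfi]
    rw [TensorProduct.sum_tmul]
    refine Finset.sum_congr rfl fun a _ => ?_
    rw [TensorProduct.tmul_sum]
    refine Finset.sum_congr rfl fun b _ => ?_
    rw [TensorProduct.tmul_smul, TensorProduct.smul_tmul', smul_smul, mul_comm,
      ← TensorProduct.smul_tmul']
  calc ∑ i, (x * e i) ⊗ₜ[C'] (f i)
      = ∑ i, ∑ a, ∑ b, (Λ (x * e i * f a) * Λ (f i * f b)) • ((e a : D') ⊗ₜ[C'] (e b : D')) :=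
        Finset.sum_congr rfl fun i _ => h1 i
    _ = ∑ a, ∑ b, ∑ i, (Λ (x * e i * f a) * Λ (f i * f b)) • ((e a : D') ⊗ₜ[C'] (e b : D')) := by
        rw [Finset.sum_comm]
        exact Finset.sum_congr rfl fun a _ => Finset.sum_comm
    _ = ∑ a, ∑ b, Λ (x * f a * f b) • ((e a : D') ⊗ₜ[C'] (e b : D')) := by
        refine Finset.sum_congr rfl fun a _ => Finset.sum_congr rfl fun b _ => ?_
        rw [← Finset.sum_smul, aux_frob_key Λ e f hd]

lemma aux_casimir_comm {n : ℕ} (Λ : D' →ₗ[C'] C') (e : Module.Basis (Fin n) C' D') (f : Fin n → D')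
    (hd : ∀ i k, Λ (e i * f k) = if i = k then 1 else 0) (x : D') :
    ∑ i, (f i : D') ⊗ₜ[C'] (x * e i) = ∑ i, (x * e i) ⊗ₜ[C'] (f i) := by
  have h1 := aux_casimir_expand Λ e f hd x
  have h2 := congrArg (TensorProduct.comm C' D' D') h1
  simp only [map_sum, TensorProduct.comm_tmul, map_smul] at h2
  rw [h2, h1, Finset.sum_comm]
  refine Finset.sum_congr rfl fun a _ => Finset.sum_congr rfl fun b _ => ?_
  rw [show x * f b * f a = x * f a * f b by ring]

section AuxBil

variable {C' : Type u} [CommRing C'] {F' : Type u} [AddCommGroup F'] [Module C' F']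
variable (Rsub : Submodule C' (F' ⊗[C'] F'))
variable (A' : Type u) [CommRing A'] [Algebra C' A']
variable (j' : SymQuot C' F' Rsub →ₗ[C'] A')

lemma aux_bil0_symm (u v : F') :
    bil0 C' F' Rsub A' j' v u = bil0 C' F' Rsub A' j' u v := by
  have h : symMk C' F' v u = symMk C' F' u v := Subtype.ext <| by
    simp only [symMk, LinearMap.mk₂_apply]
    exact add_comm _ _
  simp only [bil0, LinearMap.compr₂_apply, h]

lemma aux_bilE_one_tmul (u v : F') :
    bilE C' F' Rsub A' j' ((1 : A') ⊗ₜ[C'] u) ((1 : A') ⊗ₜ[C'] v)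
      = bil0 C' F' Rsub A' j' u v := by
  simp [bilE, LinearMap.liftBaseChange_tmul]

lemma aux_polar_cliffordQ [Invertible (2 : C')] (u v : F') :
    QuadraticMap.polar (cliffordQ C' F' Rsub A' j') ((1 : A') ⊗ₜ[C'] u) ((1 : A') ⊗ₜ[C'] v)
      = bil0 C' F' Rsub A' j' u v := by
  rw [cliffordQ, LinearMap.BilinMap.polar_toQuadraticMap]
  simp only [LinearMap.smul_apply, smul_eq_mul, aux_bilE_one_tmul,
    aux_bil0_symm Rsub A' j' v u]
  rw [← add_mul, ← map_add, ← mul_two, invOf_mul_self, map_one, one_mul]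

lemma aux_liftbil0_eq_zero (r : F' ⊗[C'] F') (hr : r ∈ Rsub)
    (hcomm : (TensorProduct.comm C' F' F') r = r) :
    TensorProduct.lift (bil0 C' F' Rsub A' j') r = 0 := by
  have hfac : TensorProduct.lift (bil0 C' F' Rsub A' j')
      = (j' ∘ₗ (Rsub.comap (symTensors C' F').subtype).mkQ) ∘ₗ
        TensorProduct.lift (symMk C' F') := by
    rw [bil0, TensorProduct.lift_compr₂]
  have hval : ((symTensors C' F').subtype ∘ₗ TensorProduct.lift (symMk C' F'))
      = LinearMap.id + (TensorProduct.comm C' F' F').toLinearMap := by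
    apply TensorProduct.ext'
    intro u v
    simp [symMk]
  have hs : ((TensorProduct.lift (symMk C' F') r : ↥(symTensors C' F')) : F' ⊗[C'] F')
      = r + r := by
    have h := DFunLike.congr_fun hval r
    simpa [hcomm] using h
  have hmem : TensorProduct.lift (symMk C' F') r ∈
      Rsub.comap (symTensors C' F').subtype := by
    simp only [Submodule.mem_comap, Submodule.subtype_apply]
    rw [hs]
    exact Submodule.add_mem _ hr hr
  rw [hfac, LinearMap.comp_apply, LinearMap.comp_apply]
  have hz : (Rsub.comap (symTensors C' F').subtype).mkQ
      (TensorProduct.lift (symMk C' F') r) = 0 := by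
    rw [Submodule.mkQ_apply]
    exact (Submodule.Quotient.mk_eq_zero _).2 hmem
  rw [hz]
  exact map_zero _

end AuxBil

lemma aux_frobRho_apply {n : ℕ} (e f : Fin n → D') (d : D') :
    frobRho C' D' e f d = ∑ i, frobPi C' D' (d * e i) ⊗ₜ[C'] frobPi C' D' (f i) := by
  simp [frobRho, LinearMap.sum_apply]

lemma aux_comm_frobRho {n : ℕ} (Λ : D' →ₗ[C'] C') (e : Module.Basis (Fin n) C' D') (f : Fin n → D')
    (hd : ∀ i k, Λ (e i * f k) = if i = k then 1 else 0) (d : D') :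
    (TensorProduct.comm C' (FrobQuotF C' D') (FrobQuotF C' D')) (frobRho C' D' ⇑e f d)
      = frobRho C' D' ⇑e f d := by
  have hc := congrArg (TensorProduct.map (frobPi C' D') (frobPi C' D'))
    (aux_casimir_comm Λ e f hd d)
  simp only [map_sum, TensorProduct.map_tmul] at hc
  rw [aux_frobRho_apply, map_sum]
  simp only [TensorProduct.comm_tmul]
  rw [hc, ← aux_frobRho_apply]

end Aux


section AuxMain

variable {C' : Type u} [CommRing C'] {F' : Type u} [AddCommGroup F'] [Module C' F']

set_option maxHeartbeats 1000000 in
lemma aux_main [Invertible (2 : C')] (Rsub : Submodule C' (F' ⊗[C'] F'))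
    (A' : Type u) [CommRing A'] [Algebra C' A'] (j' : SymQuot C' F' Rsub →ₗ[C'] A')
    (hcomm : ∀ r ∈ Rsub, (TensorProduct.comm C' F' F') r = r)
    (hUP : ∀ (B : Type u) [CommRing B] [Algebra C' B]
      (g : SymQuot C' F' Rsub →ₗ[C'] B), ∃! h : A' →ₐ[C'] B, (h.toLinearMap ∘ₗ j') = g) :
    ∃ φ : RingQuot (relOfR C' F' Rsub) →ₐ[C'] CliffordAlgebra (cliffordQ C' F' Rsub A' j'),
      Function.Surjective φ ∧
      ∀ u : F', φ (RingQuot.mkAlgHom C' (relOfR C' F' Rsub) (TensorAlgebra.ι C' u))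
        = CliffordAlgebra.ι (cliffordQ C' F' Rsub A' j') ((1 : A') ⊗ₜ[C'] u) := by
  classical
  set q := cliffordQ C' F' Rsub A' j' with hqdef
  let ιC : F' →ₗ[C'] CliffordAlgebra q :=
    ((CliffordAlgebra.ι q).restrictScalars C') ∘ₗ (TensorProduct.mk C' A' F' 1)
  have hιC : ∀ u : F', ιC u = CliffordAlgebra.ι q ((1 : A') ⊗ₜ[C'] u) := fun u => rfl
  let ψ : TensorAlgebra C' F' →ₐ[C'] CliffordAlgebra q := TensorAlgebra.lift C' ιC
  let Lm : F' ⊗[C'] F' →ₗ[C'] CliffordAlgebra q :=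
    TensorProduct.lift ((LinearMap.mul C' (CliffordAlgebra q)).compl₁₂ ιC ιC)
  have hψι : ∀ u : F', ψ (TensorAlgebra.ι C' u) = ιC u :=
    fun u => TensorAlgebra.lift_ι_apply _ _
  have hψsq : ∀ z, ψ (tensorSquareMul C' F' z) = Lm z := by
    intro z
    have h : (ψ.toLinearMap ∘ₗ tensorSquareMul C' F') = Lm := by
      apply TensorProduct.ext'
      intro u v
      simp only [LinearMap.comp_apply, tensorSquareMul, TensorProduct.lift.tmul,
        LinearMap.compl₁₂_apply, LinearMap.mul_apply', AlgHom.toLinearMap_apply, map_mul, Lm]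
      rw [hψι, hψι]
    exact DFunLike.congr_fun h z
  have h2L : ∀ z, Lm z + Lm ((TensorProduct.comm C' F' F') z)
      = algebraMap A' (CliffordAlgebra q) (TensorProduct.lift (bil0 C' F' Rsub A' j') z) := by
    intro z
    have h : (Lm + Lm ∘ₗ (TensorProduct.comm C' F' F').toLinearMap)
        = ((Algebra.linearMap A' (CliffordAlgebra q)).restrictScalars C') ∘ₗ
          TensorProduct.lift (bil0 C' F' Rsub A' j') := by
      apply TensorProduct.ext'
      intro u v
      simp only [LinearMap.add_apply, LinearMap.comp_apply, LinearEquiv.coe_coe,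
        TensorProduct.comm_tmul, TensorProduct.lift.tmul, LinearMap.compl₁₂_apply,
        LinearMap.mul_apply', LinearMap.coe_restrictScalars, Algebra.linearMap_apply, Lm]
      rw [hιC, hιC, CliffordAlgebra.ι_mul_ι_add_swap, hqdef, aux_polar_cliffordQ]
    exact DFunLike.congr_fun h z
  have hLm0 : ∀ r ∈ Rsub, Lm r = 0 := by
    intro r hr
    have hc := hcomm r hr
    have h := h2L r
    rw [hc, aux_liftbil0_eq_zero Rsub A' j' r hr hc, map_zero] at h
    have h2 : (2 : C') • Lm r = 0 := by rw [two_smul]; exact h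
    calc Lm r = (⅟ (2 : C')) • ((2 : C') • Lm r) := by
          rw [smul_smul, invOf_mul_self, one_smul]
      _ = 0 := by rw [h2, smul_zero]
  have hrel : ∀ ⦃x y⦄, relOfR C' F' Rsub x y → ψ x = ψ y := by
    rintro x y ⟨⟨r, hr, rfl⟩, rfl⟩
    rw [map_zero, hψsq, hLm0 r hr]
  let φ : RingQuot (relOfR C' F' Rsub) →ₐ[C'] CliffordAlgebra q :=
    RingQuot.liftAlgHom C' ⟨ψ, hrel⟩
  have hφmk : ∀ x, φ (RingQuot.mkAlgHom C' (relOfR C' F' Rsub) x) = ψ x := fun x =>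
    RingQuot.liftAlgHom_mkAlgHom_apply _ _ _ _
  have hφu : ∀ u : F',
      φ (RingQuot.mkAlgHom C' (relOfR C' F' Rsub) (TensorAlgebra.ι C' u))
        = CliffordAlgebra.ι q ((1 : A') ⊗ₜ[C'] u) := by
    intro u; rw [hφmk, hψι]; exact hιC u
  have hι1 : ∀ u : F', CliffordAlgebra.ι q ((1 : A') ⊗ₜ[C'] u) ∈ φ.range := fun u =>
    ⟨RingQuot.mkAlgHom C' (relOfR C' F' Rsub) (TensorAlgebra.ι C' u), hφu u⟩
  have hAgen : ∀ a : A', a ∈ Algebra.adjoin C' (Set.range ⇑j') := by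
    intro a
    have hjS : ∀ z, j' z ∈ Subalgebra.toSubmodule (Algebra.adjoin C' (Set.range ⇑j')) :=
      fun z => Algebra.subset_adjoin ⟨z, rfl⟩
    let g : SymQuot C' F' Rsub →ₗ[C'] (Algebra.adjoin C' (Set.range ⇑j')) :=
      LinearMap.codRestrict (Subalgebra.toSubmodule (Algebra.adjoin C' (Set.range ⇑j'))) j' hjS
    obtain ⟨h, hh, -⟩ := hUP (Algebra.adjoin C' (Set.range ⇑j')) g
    obtain ⟨h₀, -, huniq⟩ := hUP A' j'
    have h1 : (Algebra.adjoin C' (Set.range ⇑j')).val.comp h = h₀ := by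
      apply huniq
      apply LinearMap.ext; intro z
      have hz := DFunLike.congr_fun hh z
      simp only [LinearMap.comp_apply, AlgHom.toLinearMap_apply] at hz ⊢
      rw [AlgHom.comp_apply, hz]
      rfl
    have h2 : (Algebra.adjoin C' (Set.range ⇑j')).val.comp h = AlgHom.id C' A' := by
      rw [h1, ← huniq (AlgHom.id C' A') (LinearMap.ext fun z => rfl)]
    have h3 : ((Algebra.adjoin C' (Set.range ⇑j')).val (h a)) = a :=
      DFunLike.congr_fun h2 a
    exact h3 ▸ (h a).2
  have hbase : ∀ a : A', algebraMap A' (CliffordAlgebra q) a ∈ φ.range := by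
    intro a
    refine Algebra.adjoin_induction
      (p := fun a _ => algebraMap A' (CliffordAlgebra q) a ∈ φ.range) ?_ ?_ ?_ ?_ (hAgen a)
    · rintro _ ⟨z, rfl⟩
      obtain ⟨s, rfl⟩ := Submodule.mkQ_surjective _ z
      obtain ⟨sv, hsv⟩ := s
      refine Submodule.span_induction
        (p := fun x hx => algebraMap A' (CliffordAlgebra q)
          (j' ((Submodule.mkQ _) (⟨x, hx⟩ : ↥(symTensors C' F')))) ∈ φ.range)
        ?_ ?_ ?_ ?_ hsv
      · rintro x ⟨u, v, rfl⟩
        show algebraMap A' (CliffordAlgebra q)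
          (j' ((Submodule.mkQ _) (⟨u ⊗ₜ[C'] v + v ⊗ₜ[C'] u, _⟩ : ↥(symTensors C' F')))) ∈ φ.range
        have hx2 : j' ((Submodule.mkQ _)
            (⟨u ⊗ₜ[C'] v + v ⊗ₜ[C'] u, Submodule.subset_span ⟨u, v, rfl⟩⟩ :
              ↥(symTensors C' F'))) = bil0 C' F' Rsub A' j' u v := rfl
        rw [hx2]
        have hpolar : algebraMap A' (CliffordAlgebra q) (bil0 C' F' Rsub A' j' u v)
            = CliffordAlgebra.ι q ((1 : A') ⊗ₜ[C'] u) * CliffordAlgebra.ι q ((1 : A') ⊗ₜ[C'] v)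
              + CliffordAlgebra.ι q ((1 : A') ⊗ₜ[C'] v)
                * CliffordAlgebra.ι q ((1 : A') ⊗ₜ[C'] u) := by
          rw [CliffordAlgebra.ι_mul_ι_add_swap, hqdef, aux_polar_cliffordQ]
        rw [hpolar]
        exact Subalgebra.add_mem _ (Subalgebra.mul_mem _ (hι1 u) (hι1 v))
          (Subalgebra.mul_mem _ (hι1 v) (hι1 u))
      · show algebraMap A' (CliffordAlgebra q)
          (j' ((Submodule.mkQ _) (⟨0, Submodule.zero_mem _⟩ : ↥(symTensors C' F')))) ∈ φ.range
        have h0 : (⟨0, Submodule.zero_mem _⟩ : ↥(symTensors C' F')) = 0 := rfl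
        rw [h0, map_zero, map_zero, map_zero]
        exact Subalgebra.zero_mem _
      · intro x y hx hy px py
        show algebraMap A' (CliffordAlgebra q)
          (j' ((Submodule.mkQ _) (⟨x + y, Submodule.add_mem _ hx hy⟩ :
            ↥(symTensors C' F')))) ∈ φ.range
        have hxy : (⟨x + y, Submodule.add_mem _ hx hy⟩ : ↥(symTensors C' F'))
            = ⟨x, hx⟩ + ⟨y, hy⟩ := rfl
        rw [hxy, map_add, map_add, map_add]
        exact Subalgebra.add_mem _ px py
      · intro c x hx px
        show algebraMap A' (CliffordAlgebra q)
          (j' ((Submodule.mkQ _) (⟨c • x, Submodule.smul_mem _ c hx⟩ :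
            ↥(symTensors C' F')))) ∈ φ.range
        have hcx : (⟨c • x, Submodule.smul_mem _ c hx⟩ : ↥(symTensors C' F'))
            = c • (⟨x, hx⟩ : ↥(symTensors C' F')) := rfl
        rw [hcx, map_smul, map_smul,
          show algebraMap A' (CliffordAlgebra q)
              (c • j' ((Submodule.mkQ _) (⟨x, hx⟩ : ↥(symTensors C' F'))))
            = c • algebraMap A' (CliffordAlgebra q)
              (j' ((Submodule.mkQ _) (⟨x, hx⟩ : ↥(symTensors C' F')))) from
            map_smul ((Algebra.linearMap A' (CliffordAlgebra q)).restrictScalars C') c _]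
        exact Subalgebra.smul_mem _ px c
    · intro r
      rw [← IsScalarTower.algebraMap_apply C' A' (CliffordAlgebra q) r]
      exact Subalgebra.algebraMap_mem _ r
    · intro x y _ _ px py
      rw [map_add]
      exact Subalgebra.add_mem _ px py
    · intro x y _ _ px py
      rw [map_mul]
      exact Subalgebra.mul_mem _ px py
  have hsurj : Function.Surjective φ := by
    intro x
    have hx : x ∈ φ.range := by
      induction x using CliffordAlgebra.induction with
      | algebraMap r => exact hbase r
      | ι m =>
          induction m using TensorProduct.induction_on with
          | zero => rw [map_zero]; exact Subalgebra.zero_mem _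
          | tmul a u =>
              have hsm : CliffordAlgebra.ι q (a ⊗ₜ[C'] u)
                  = algebraMap A' (CliffordAlgebra q) a
                      * CliffordAlgebra.ι q ((1 : A') ⊗ₜ[C'] u) := by
                rw [← Algebra.smul_def, ← map_smul]
                congr 1
                rw [TensorProduct.smul_tmul', smul_eq_mul, mul_one]
              rw [hsm]
              exact Subalgebra.mul_mem _ (hbase a) (hι1 u)
          | add m₁ m₂ h₁ h₂ => rw [map_add]; exact Subalgebra.add_mem _ h₁ h₂
      | mul a b ha hb => exact Subalgebra.mul_mem _ ha hb
      | add a b ha hb => exact Subalgebra.add_mem _ ha hb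
    obtain ⟨y, hy⟩ := hx
    exact ⟨y, hy⟩
  exact ⟨φ, hsurj, hφu⟩

end AuxMain

/-- Let `C` be a commutative ring with `2` invertible and `D/C` a
relative Frobenius extension of rank `n` with Frobenius form `Λ` and `Λ`-dual bases
`(e i)`, `(f i)`.  Assume `C·1` is a direct summand of `D`, with `F := D/C·1` finitely
generated projective, and let `R ⊆ F ⊗ F` be the image of `ρ : d ↦ ∑ i, π (d e i) ⊗ π (f i)`.
Then `R` is contained in the symmetric tensors `Sym₂ F`, and — provided `R` is a direct
summand of `Sym₂ F` — there is a surjective `C`-algebra homomorphism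
`H(D/C) := T_C(F)/(R) → Cl_A(E, q)` sending the class of `π d` to `ι (π d ⊗ 1)`, where
`A` is (a realization, via its universal property, of) the symmetric algebra
`Sym_C (Sym₂ F / R)` and `E = F ⊗ A`. -/
theorem frobenius_H_relations_symmetric_and_surjection_to_clifford
    [Invertible (2 : C)]
    (D : Type u) [CommRing D] [Algebra C D] {n : ℕ}
    (Λ : D →ₗ[C] C)
    (hfrob : Function.Bijective fun d : D => Λ ∘ₗ LinearMap.mulLeft C d)
    (e f : Module.Basis (Fin n) C D)
    (hdual : ∀ i j, Λ (e i * f j) = if i = j then 1 else 0)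
    (hcompl : ∃ W : Submodule C D, IsCompl (Submodule.span C {(1 : D)}) W)
    [Module.Finite C (FrobQuotF C D)] [Module.Projective C (FrobQuotF C D)]
    (A : Type u) [CommRing A] [Algebra C A]
    (j : SymQuot C (FrobQuotF C D) (LinearMap.range (frobRho C D ⇑e ⇑f)) →ₗ[C] A)
    (hUP : ∀ (B : Type u) [CommRing B] [Algebra C B]
      (g : SymQuot C (FrobQuotF C D) (LinearMap.range (frobRho C D ⇑e ⇑f)) →ₗ[C] B),
      ∃! h : A →ₐ[C] B, (h.toLinearMap ∘ₗ j) = g) :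
    LinearMap.range (frobRho C D ⇑e ⇑f) ≤ symTensors C (FrobQuotF C D) ∧
    ((∃ W : Submodule C (FrobQuotF C D ⊗[C] FrobQuotF C D),
        W ≤ symTensors C (FrobQuotF C D) ∧
        LinearMap.range (frobRho C D ⇑e ⇑f) ⊓ W = ⊥ ∧
        LinearMap.range (frobRho C D ⇑e ⇑f) ⊔ W = symTensors C (FrobQuotF C D)) →
      ∃ φ : RingQuot (relOfR C (FrobQuotF C D) (LinearMap.range (frobRho C D ⇑e ⇑f))) →ₐ[C]
          CliffordAlgebra (cliffordQ C (FrobQuotF C D) (LinearMap.range (frobRho C D ⇑e ⇑f)) A j),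
        Function.Surjective φ ∧
        ∀ d : D,
          φ (RingQuot.mkAlgHom C (relOfR C (FrobQuotF C D) (LinearMap.range (frobRho C D ⇑e ⇑f)))
              (TensorAlgebra.ι C (frobPi C D d)))
            = CliffordAlgebra.ι
                (cliffordQ C (FrobQuotF C D) (LinearMap.range (frobRho C D ⇑e ⇑f)) A j)
                ((1 : A) ⊗ₜ[C] frobPi C D d)) := by
  have hcommρ : ∀ d : D, (TensorProduct.comm C (FrobQuotF C D) (FrobQuotF C D))
      (frobRho C D ⇑e ⇑f d) = frobRho C D ⇑e ⇑f d :=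
    fun d => aux_comm_frobRho Λ e ⇑f hdual d
  have part1 : LinearMap.range (frobRho C D ⇑e ⇑f) ≤ symTensors C (FrobQuotF C D) := by
    rintro z ⟨d, rfl⟩
    exact aux_mem_symTensors_of_comm_fix _ (hcommρ d)
  refine ⟨part1, fun _ => ?_⟩
  have hcomm : ∀ r ∈ LinearMap.range (frobRho C D ⇑e ⇑f),
      (TensorProduct.comm C (FrobQuotF C D) (FrobQuotF C D)) r = r := by
    rintro r ⟨d, rfl⟩
    exact hcommρ d
  obtain ⟨φ, hsurj, hval⟩ :=
    aux_main (LinearMap.range (frobRho C D ⇑e ⇑f)) A j hcomm hUP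
  exact ⟨φ, hsurj, fun d => hval (frobPi C D d)⟩


end
end
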